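/- For all d ≥ 3 and all D ⊆ ℝ^d with nonempty interior, the following are equivalent: (a) CH, i.e., 2^ℵ₀ ≤ ℵ₁; (b) for all nonzero vectors u₁, …, u_d spanning ℝ^d, there are A₁, …, A_d covering D such that H_{u_i}(p) ∩ A_i is countable for all p ∈ ℝ^d and all 1 ≤ i ≤ d; (c) there are nonzero vectors u₁, …, u_{2d−2} and sets A₁, …, A_{2d−2} covering D such that H_{u_i}(p) ∩ A_i is countable for all p ∈ ℝ^d and all 1 ≤ i ≤ 2d−2. -/

import Mathlib

open Cardinal

/-- `Hplane u p` is the hyperplane through `p` orthogonal to `u`. -/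
def Hplane {d : ℕ} (u p : EuclideanSpace ℝ (Fin d)) : Set (EuclideanSpace ℝ (Fin d)) :=
  {x | (inner ℝ (x - p) u : ℝ) = 0}

section aux

open Set

universe u

lemma CH_univ_iff : (continuum.{u} ≤ aleph.{u} 1) ↔ (continuum.{0} ≤ aleph.{0} 1) := by
  rw [← lift_continuum.{u,0}]
  exact lift_le_aleph_one

lemma sierp {ε : ℝ} (hε : 0 < ε) (P Q : ℝ → ℝ → Prop)
    (hcov : ∀ s ∈ Set.Ioo (-ε) ε, ∀ t ∈ Set.Ioo (-ε) ε, P s t ∨ Q s t)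
    (hP : ∀ s, {t | P s t}.Countable) (hQ : ∀ t, {s | Q s t}.Countable) :
    continuum.{0} ≤ aleph.{0} 1 := by
  by_contra hc
  push_neg at hc
  have hI : #(Set.Ioo (-ε) ε) = continuum := Cardinal.mk_Ioo_real (by linarith)
  have h1 : aleph 1 ≤ #(Set.Ioo (-ε) ε) := by rw [hI]; exact hc.le
  obtain ⟨S, hSsub, hScard⟩ := Cardinal.le_mk_iff_exists_subset.mp h1
  have hTcard : #(⋃ s ∈ S, {t | P s t}) ≤ aleph 1 := by
    refine (Cardinal.mk_biUnion_le _ _).trans ?_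
    have hsup : ⨆ s : S, #({t | P (s : ℝ) t}) ≤ ℵ₀ :=
      ciSup_le' fun s => (hP (s : ℝ)).le_aleph0
    calc #S * ⨆ s : S, #({t | P (s : ℝ) t}) ≤ aleph 1 * ℵ₀ :=
          mul_le_mul' hScard.le hsup
      _ ≤ aleph 1 * aleph 1 := mul_le_mul' le_rfl (aleph0_le_aleph 1)
      _ = aleph 1 := mul_eq_self (aleph0_le_aleph 1)
  have hex : ∃ t ∈ Set.Ioo (-ε) ε, t ∉ ⋃ s ∈ S, {t | P s t} := by
    by_contra h
    push_neg at h
    have : #(Set.Ioo (-ε) ε) ≤ #(⋃ s ∈ S, {t | P s t}) :=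
      Cardinal.mk_le_mk_of_subset h
    rw [hI] at this
    exact hc.not_ge (this.trans hTcard)
  obtain ⟨t, htI, htT⟩ := hex
  have hSsubQ : S ⊆ {s | Q s t} := by
    intro s hs
    rcases hcov s (hSsub hs) t htI with h | h
    · exact absurd (Set.mem_biUnion hs h) htT
    · exact h
  have hfin : #S ≤ ℵ₀ := ((hQ t).mono hSsubQ).le_aleph0
  rw [hScard] at hfin
  exact (aleph0_lt_aleph_one).not_ge hfin

/-- There is a nonzero vector orthogonal to any `d-1` given vectors in `ℝ^d`. -/
lemma exists_perp (d : ℕ) (hd : 1 ≤ d) (v : Fin (d - 1) → EuclideanSpace ℝ (Fin d)) :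
    ∃ w : EuclideanSpace ℝ (Fin d), w ≠ 0 ∧ ∀ j, (inner ℝ (v j) w : ℝ) = 0 := by
  let L : EuclideanSpace ℝ (Fin d) →ₗ[ℝ] (Fin (d - 1) → ℝ) :=
    { toFun := fun x j => (inner ℝ (v j) x : ℝ)
      map_add' := fun x y => by funext j; simp [inner_add_right]
      map_smul' := fun c x => by funext j; simp [inner_smul_right] }
  have hker : LinearMap.ker L ≠ ⊥ := by
    intro h
    have hinj : Function.Injective L := LinearMap.ker_eq_bot.mp h
    have h1 : Module.finrank ℝ (EuclideanSpace ℝ (Fin d)) ≤ Module.finrank ℝ (Fin (d - 1) → ℝ) :=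
      LinearMap.finrank_le_finrank_of_injective hinj
    rw [finrank_euclideanSpace_fin, Module.finrank_fin_fun] at h1
    omega
  obtain ⟨w, hw, hw0⟩ := (LinearMap.ker L).ne_bot_iff.mp hker
  refine ⟨w, hw0, fun j => ?_⟩
  have h := LinearMap.mem_ker.mp hw
  have h2 : L w j = 0 := by rw [h]; rfl
  exact h2

/-- Key converse lemma: a covering with countable hyperplane sections of a set with
nonempty interior by at most `2d-2` pieces implies CH. -/
lemma key (d n : ℕ) (hd : 3 ≤ d) (hn : n ≤ 2 * d - 2)
    (D : Set (EuclideanSpace ℝ (Fin d))) (hD : (interior D).Nonempty)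
    (u : Fin n → EuclideanSpace ℝ (Fin d)) (A : Fin n → Set (EuclideanSpace ℝ (Fin d)))
    (hcov : D ⊆ ⋃ i, A i)
    (hcnt : ∀ p i, (Hplane (u i) p ∩ A i).Countable) :
    continuum.{0} ≤ aleph.{0} 1 := by
  classical
  -- a ball inside D
  obtain ⟨c, hc⟩ := hD
  obtain ⟨ε, hε, hball⟩ := Metric.isOpen_iff.mp isOpen_interior c hc
  have hballD : Metric.ball c ε ⊆ D := hball.trans interior_subset
  -- vector w₂ orthogonal to the first group
  obtain ⟨w₂, hw₂0, hw₂⟩ := exists_perp d (by omega)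
    (fun j : Fin (d - 1) => if h : (j : ℕ) < n then u ⟨j, h⟩ else 0)
  obtain ⟨w₁, hw₁0, hw₁⟩ := exists_perp d (by omega)
    (fun j : Fin (d - 1) => if h : d - 1 + (j : ℕ) < n then u ⟨d - 1 + j, h⟩ else 0)
  have hw₂u : ∀ i : Fin n, (i : ℕ) < d - 1 → (inner ℝ (u i) w₂ : ℝ) = 0 := by
    intro i hi
    have := hw₂ ⟨i, hi⟩
    rwa [dif_pos (by exact i.isLt), Fin.eta] at this
  have hw₁u : ∀ i : Fin n, ¬ (i : ℕ) < d - 1 → (inner ℝ (u i) w₁ : ℝ) = 0 := by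
    intro i hi
    have hj : (i : ℕ) - (d - 1) < d - 1 := by have := i.isLt; omega
    have := hw₁ ⟨(i : ℕ) - (d - 1), hj⟩
    have heq : d - 1 + ((i : ℕ) - (d - 1)) = (i : ℕ) := by omega
    rw [dif_pos (by rw [heq]; exact i.isLt)] at this
    convert this using 3
    · exact (Fin.ext heq.symm)
  -- the map into the plane
  set φ : ℝ → ℝ → EuclideanSpace ℝ (Fin d) := fun s t => c + s • w₁ + t • w₂ with hφ
  set δ : ℝ := ε / (‖w₁‖ + ‖w₂‖ + 1) with hδdef
  have hδ : 0 < δ := by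
    apply div_pos hε
    positivity
  have hmem : ∀ s ∈ Set.Ioo (-δ) δ, ∀ t ∈ Set.Ioo (-δ) δ, φ s t ∈ Metric.ball c ε := by
    intro s hs t ht
    have hs' : |s| < δ := abs_lt.mpr ⟨hs.1, hs.2⟩
    have ht' : |t| < δ := abs_lt.mpr ⟨ht.1, ht.2⟩
    have hprod : δ * (‖w₁‖ + ‖w₂‖ + 1) = ε := by
      rw [hδdef]
      field_simp
    have hdist : dist (φ s t) c = ‖s • w₁ + t • w₂‖ := by
      rw [dist_eq_norm]
      congr 1
      simp only [hφ]
      abel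
    rw [Metric.mem_ball, hdist]
    calc ‖s • w₁ + t • w₂‖ ≤ ‖s • w₁‖ + ‖t • w₂‖ := norm_add_le _ _
      _ = |s| * ‖w₁‖ + |t| * ‖w₂‖ := by rw [norm_smul, norm_smul]; simp [Real.norm_eq_abs]
      _ ≤ δ * ‖w₁‖ + δ * ‖w₂‖ :=
          add_le_add (mul_le_mul_of_nonneg_right hs'.le (norm_nonneg _))
            (mul_le_mul_of_nonneg_right ht'.le (norm_nonneg _))
      _ < ε := by nlinarith [norm_nonneg w₁, norm_nonneg w₂]
  -- apply the Sierpiński lemma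
  apply sierp hδ
    (fun s t => ∃ i : Fin n, (i : ℕ) < d - 1 ∧ φ s t ∈ A i)
    (fun s t => ∃ i : Fin n, ¬ (i : ℕ) < d - 1 ∧ φ s t ∈ A i)
  · intro s hs t ht
    have : φ s t ∈ ⋃ i, A i := hcov (hballD (hmem s hs t ht))
    obtain ⟨i, hi⟩ := Set.mem_iUnion.mp this
    by_cases h : (i : ℕ) < d - 1
    · exact Or.inl ⟨i, h, hi⟩
    · exact Or.inr ⟨i, h, hi⟩
  · intro s
    have : {t | ∃ i : Fin n, (i : ℕ) < d - 1 ∧ φ s t ∈ A i}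
        = ⋃ i : Fin n, {t | (i : ℕ) < d - 1 ∧ φ s t ∈ A i} := by
      ext t; simp [Set.mem_iUnion]
    rw [this]
    refine Set.countable_iUnion fun i => ?_
    by_cases h : (i : ℕ) < d - 1
    · have hinj : Function.Injective fun t : ℝ => φ s t := by
        intro t₁ t₂ h12
        have : t₁ • w₂ = t₂ • w₂ := by
          have := h12
          simp only [hφ] at this
          exact add_left_cancel this
        exact smul_left_injective ℝ hw₂0 this
      have hsub : {t | (i : ℕ) < d - 1 ∧ φ s t ∈ A i}
          ⊆ (fun t : ℝ => φ s t) ⁻¹' (Hplane (u i) (φ s 0) ∩ A i) := by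
        intro t ⟨_, htA⟩
        refine ⟨?_, htA⟩
        show (inner ℝ (φ s t - φ s 0) (u i) : ℝ) = 0
        have hdiff : φ s t - φ s 0 = t • w₂ := by
          simp only [hφ, zero_smul, add_zero]
          abel
        rw [hdiff, real_inner_smul_left, real_inner_comm, hw₂u i h, mul_zero]
      exact ((hcnt (φ s 0) i).preimage hinj).mono hsub
    · have : {t | (i : ℕ) < d - 1 ∧ φ s t ∈ A i} = ∅ := by
        ext t; simp [h]
      rw [this]; exact Set.countable_empty
  · intro t
    have : {s | ∃ i : Fin n, ¬ (i : ℕ) < d - 1 ∧ φ s t ∈ A i}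
        = ⋃ i : Fin n, {s | ¬ (i : ℕ) < d - 1 ∧ φ s t ∈ A i} := by
      ext s; simp [Set.mem_iUnion]
    rw [this]
    refine Set.countable_iUnion fun i => ?_
    by_cases h : ¬ (i : ℕ) < d - 1
    · have hinj : Function.Injective fun s : ℝ => φ s t := by
        intro s₁ s₂ h12
        have h' : s₁ • w₁ + t • w₂ = s₂ • w₁ + t • w₂ := by
          have := h12
          simp only [hφ, add_assoc] at this
          exact add_left_cancel this
        have : s₁ • w₁ = s₂ • w₁ := add_right_cancel h'
        exact smul_left_injective ℝ hw₁0 this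
      have hsub : {s | ¬ (i : ℕ) < d - 1 ∧ φ s t ∈ A i}
          ⊆ (fun s : ℝ => φ s t) ⁻¹' (Hplane (u i) (φ 0 t) ∩ A i) := by
        intro s ⟨_, hsA⟩
        refine ⟨?_, hsA⟩
        show (inner ℝ (φ s t - φ 0 t) (u i) : ℝ) = 0
        have hdiff : φ s t - φ 0 t = s • w₁ := by
          simp only [hφ, zero_smul, add_zero]
          abel
        rw [hdiff, real_inner_smul_left, real_inner_comm, hw₁u i h, mul_zero]
      exact ((hcnt (φ 0 t) i).preimage hinj).mono hsub
    · have : {s | ¬ (i : ℕ) < d - 1 ∧ φ s t ∈ A i} = ∅ := by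
        ext s; simp at h ⊢; intro h'; exact absurd h' (by omega)
      rw [this]; exact Set.countable_empty

/-- Forward direction: CH gives a covering of all of `ℝ^d` by sets with countable
hyperplane sections, for any spanning family. -/
lemma forward (d n : ℕ) (hn : 0 < n)
    (hCH : continuum.{0} ≤ aleph.{0} 1)
    (u : Fin n → EuclideanSpace ℝ (Fin d))
    (hspan : Submodule.span ℝ (Set.range u) = ⊤) :
    ∃ A : Fin n → Set (EuclideanSpace ℝ (Fin d)),
      (⋃ i, A i) = Set.univ ∧
      ∀ (p : EuclideanSpace ℝ (Fin d)) (i : Fin n),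
        (Hplane (u i) p ∩ A i).Countable := by
  classical
  haveI : Nonempty (Fin n) := ⟨⟨0, hn⟩⟩
  set W := (aleph.{0} 1).ord.ToType with hW
  have hle : #ℝ ≤ #W := by
    rw [Cardinal.mk_real, hW, Cardinal.mk_ord_toType]
    exact hCH
  obtain ⟨r⟩ := (Cardinal.le_def ℝ W).mp hle
  set g : EuclideanSpace ℝ (Fin d) → Fin n → W := fun x i => r (inner ℝ x (u i) : ℝ) with hg
  refine ⟨fun i => {x | ∀ k, g x k ≤ g x i}, ?_, ?_⟩
  · ext x
    simp only [Set.mem_iUnion, Set.mem_univ, iff_true]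
    obtain ⟨i, hi⟩ := Finite.exists_max (g x)
    exact ⟨i, fun k => hi k⟩
  · intro p i
    set cval : ℝ := (inner ℝ p (u i) : ℝ) with hcval
    set Sset : Set ℝ := {t : ℝ | r t ≤ r cval} with hSset
    have hSsetc : Sset.Countable := by
      have hIic : (Set.Iic (r cval) : Set W).Countable := by
        rw [← Set.Iio_insert]
        exact ((Cardinal.countable_iff_lt_aleph_one _).mpr
          (Cardinal.mk_Iio_ord_toType _)).insert _
      have : Sset = r ⁻¹' (Set.Iic (r cval)) := rfl
      rw [this]
      exact hIic.preimage r.injective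
    set F : EuclideanSpace ℝ (Fin d) → Fin n → ℝ := fun x k => (inner ℝ x (u k) : ℝ) with hF
    have hFinj : Function.Injective F := by
      intro x y hxy
      have horth : ∀ k, (inner ℝ (x - y) (u k) : ℝ) = 0 := by
        intro k
        have := congrFun hxy k
        simp only [hF] at this
        rw [inner_sub_left, this, sub_self]
      have hmem : x - y ∈ (Submodule.span ℝ (Set.range u))ᗮ := by
        rw [Submodule.mem_orthogonal']
        intro v hv
        induction hv using Submodule.span_induction with
        | mem v hv => obtain ⟨k, rfl⟩ := hv; exact horth k
        | zero => exact inner_zero_right _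
        | add a b _ _ ha hb => rw [inner_add_right, ha, hb, add_zero]
        | smul c a _ ha => rw [real_inner_smul_right, ha, mul_zero]
      rw [hspan, Submodule.top_orthogonal_eq_bot, Submodule.mem_bot, sub_eq_zero] at hmem
      exact hmem
    have hsub : Hplane (u i) p ∩ {x | ∀ k, g x k ≤ g x i}
        ⊆ F ⁻¹' {f : Fin n → ℝ | ∀ k, f k ∈ Sset} := by
      intro x ⟨hxH, hxA⟩
      have hxi : (inner ℝ x (u i) : ℝ) = cval := by
        have : (inner ℝ (x - p) (u i) : ℝ) = 0 := hxH
        rw [inner_sub_left] at this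
        linarith [this]
      intro k
      show r (F x k) ≤ r cval
      have := hxA k
      simp only [hg] at this
      rw [← hxi]
      exact this
    exact ((Set.countable_pi fun _ => hSsetc).preimage hFinj).mono hsub

end aux

theorem stmt12 (d : ℕ) (hd : 3 ≤ d)
    (D : Set (EuclideanSpace ℝ (Fin d))) (hD : (interior D).Nonempty) :
    ((continuum ≤ aleph 1 ↔
      (∀ u : Fin d → EuclideanSpace ℝ (Fin d), (∀ i, u i ≠ 0) →
        Submodule.span ℝ (Set.range u) = ⊤ →
        ∃ A : Fin d → Set (EuclideanSpace ℝ (Fin d)),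
          D ⊆ (⋃ i, A i) ∧
          ∀ (p : EuclideanSpace ℝ (Fin d)) (i : Fin d),
            (Hplane (u i) p ∩ A i).Countable)) ∧
     (continuum ≤ aleph 1 ↔
      (∃ u : Fin (2 * d - 2) → EuclideanSpace ℝ (Fin d), (∀ i, u i ≠ 0) ∧
        ∃ A : Fin (2 * d - 2) → Set (EuclideanSpace ℝ (Fin d)),
          D ⊆ (⋃ i, A i) ∧
          ∀ (p : EuclideanSpace ℝ (Fin d)) (i : Fin (2 * d - 2)),
            (Hplane (u i) p ∩ A i).Countable))) := by
  classical
  have hsingle_span : Submodule.span ℝ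
      (Set.range fun i : Fin d => EuclideanSpace.single i (1 : ℝ)) = ⊤ := by
    have hb := (EuclideanSpace.basisFun (Fin d) ℝ).toBasis.span_eq
    rw [← hb]
    congr 1
    ext x
    constructor
    · rintro ⟨i, rfl⟩
      exact ⟨i, by rw [OrthonormalBasis.coe_toBasis, EuclideanSpace.basisFun_apply]⟩
    · rintro ⟨i, rfl⟩
      exact ⟨i, by rw [OrthonormalBasis.coe_toBasis, EuclideanSpace.basisFun_apply]⟩
  have hsingle_ne : ∀ (j : Fin d), EuclideanSpace.single j (1 : ℝ) ≠ 0 := by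
    intro j h
    have hns := EuclideanSpace.norm_single (𝕜 := ℝ) j 1
    rw [h, norm_zero] at hns
    simp at hns
  constructor
  · constructor
    · intro hCH u hu hspan
      obtain ⟨A, hAuniv, hAcnt⟩ := forward d d (by omega) (CH_univ_iff.mp hCH) u hspan
      exact ⟨A, by rw [hAuniv]; exact Set.subset_univ D, hAcnt⟩
    · intro hb
      obtain ⟨A, hAcov, hAcnt⟩ := hb (fun i => EuclideanSpace.single i 1)
        hsingle_ne hsingle_span
      exact CH_univ_iff.mpr (key d d hd (by omega) D hD _ A hAcov hAcnt)
  · constructor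
    · intro hCH
      set u2 : Fin (2 * d - 2) → EuclideanSpace ℝ (Fin d) :=
        fun i => EuclideanSpace.single ⟨min (i : ℕ) (d - 1), by omega⟩ 1 with hu2
      have hspan2 : Submodule.span ℝ (Set.range u2) = ⊤ := by
        rw [← top_le_iff, ← hsingle_span]
        apply Submodule.span_le.mpr
        rintro x ⟨j, rfl⟩
        apply Submodule.subset_span
        refine ⟨⟨(j : ℕ), by omega⟩, ?_⟩
        simp only [hu2]
        exact congrArg (fun k => EuclideanSpace.single k (1 : ℝ))
          (Fin.ext (show min (j : ℕ) (d - 1) = (j : ℕ) by have := j.isLt; omega))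
      obtain ⟨A, hAuniv, hAcnt⟩ := forward d (2 * d - 2) (by omega)
        (CH_univ_iff.mp hCH) u2 hspan2
      exact ⟨u2, fun i => hsingle_ne _, A, by rw [hAuniv]; exact Set.subset_univ D, hAcnt⟩
    · rintro ⟨u, _, A, hAcov, hAcnt⟩
      exact CH_univ_iff.mpr (key d (2 * d - 2) hd le_rfl D hD u A hAcov hAcnt)
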